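/- arXiv:2505.09581 — 3 statements merged into one kernel-verified Lean document; each statement's English description precedes it below -/
import Mathlib

section
/- Define φ(p) = f_L(p) + f_R(p) + v_R - v_L where each f_Z is the piecewise function equal to (p - p_Z)sqrt(A_Z/(p+B_Z)) for p > p_Z and (2c_Z/(γ_Z-1))((p/p_Z)^{(γ_Z-1)/(2γ_Z)} - 1) for 0 < p ≤ p_Z. Then φ is continuous and strictly increasing on (0, ∞), and hence has at most one root p* > 0. -/
open Set Real

lemma phi_aux (A B C α p0 : ℝ) (hA : 0 < A) (hB : 0 ≤ B) (hC : 0 < C)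
    (hα : 0 < α) (hp0 : 0 < p0) :
    ContinuousOn (fun p => if p0 < p then (p - p0) * Real.sqrt (A / (p + B))
      else C * ((p / p0) ^ α - 1)) (Set.Ioi 0) ∧
    StrictMonoOn (fun p => if p0 < p then (p - p0) * Real.sqrt (A / (p + B))
      else C * ((p / p0) ^ α - 1)) (Set.Ioi 0) := by
  have hsetc : {a : ℝ | ¬ p0 < a} = Iic p0 := by ext a; simp [not_lt]
  constructor
  · apply ContinuousOn.if
    · intro a ha
      have ha2 : a ∈ frontier (Ioi p0) := ha.2
      rw [frontier_Ioi, mem_singleton_iff] at ha2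
      subst ha2
      simp [div_self hp0.ne', Real.one_rpow]
    · have hcl : closure {a : ℝ | p0 < a} = Ici p0 := closure_Ioi p0
      rw [hcl]
      apply ContinuousOn.mul
      · exact (continuous_id.sub continuous_const).continuousOn
      · apply Real.continuous_sqrt.comp_continuousOn
        apply ContinuousOn.div continuousOn_const
        · exact (continuous_id.add continuous_const).continuousOn
        · intro p hp
          have : p0 ≤ p := hp.2
          have : 0 < p + B := by linarith
          exact this.ne'
    · have hcont : Continuous fun p : ℝ => C * ((p / p0) ^ α - 1) := by
        have h1 : Continuous fun p : ℝ => (p / p0) ^ α := by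
          rw [continuous_iff_continuousAt]
          intro x
          exact (Real.continuousAt_rpow_const _ _ (Or.inr hα.le)).comp
            (continuousAt_id.div_const _)
        exact continuous_const.mul (h1.sub continuous_const)
      exact hcont.continuousOn
  · intro x hx y hy hxy
    have hx0 : 0 < x := hx
    have hy0 : 0 < y := hy
    simp only
    by_cases hx' : p0 < x
    · have hy' : p0 < y := hx'.trans hxy
      rw [if_pos hx', if_pos hy']
      have hxB : 0 < x + B := by linarith
      have hyB : 0 < y + B := by linarith
      rw [Real.sqrt_div hA.le, Real.sqrt_div hA.le]
      have hsA : 0 < Real.sqrt A := Real.sqrt_pos.2 hA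
      have hsx : 0 < Real.sqrt (x + B) := Real.sqrt_pos.2 hxB
      have hsy : 0 < Real.sqrt (y + B) := Real.sqrt_pos.2 hyB
      have key : (x - p0) * Real.sqrt (y + B) < (y - p0) * Real.sqrt (x + B) := by
        have h2 : ((x - p0) * Real.sqrt (y + B)) ^ 2 < ((y - p0) * Real.sqrt (x + B)) ^ 2 := by
          rw [mul_pow, mul_pow, Real.sq_sqrt hxB.le, Real.sq_sqrt hyB.le]
          have h1 : 0 < (y - x) * (x - p0) * (y - p0) := by
            apply mul_pos (mul_pos (by linarith) (by linarith)); linarith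
          have h2 : 0 ≤ (p0 + B) * (y - x) * (x + y - 2 * p0) := by
            apply mul_nonneg (mul_nonneg (by linarith) (by linarith)); linarith
          nlinarith [h1, h2]
        exact lt_of_pow_lt_pow_left₀ 2
          (mul_nonneg (by linarith) (Real.sqrt_nonneg _)) h2
      rw [mul_div_assoc', mul_div_assoc', div_lt_div_iff₀ hsx hsy]
      calc (x - p0) * Real.sqrt A * Real.sqrt (y + B)
          = ((x - p0) * Real.sqrt (y + B)) * Real.sqrt A := by ring
        _ < ((y - p0) * Real.sqrt (x + B)) * Real.sqrt A :=
            mul_lt_mul_of_pos_right key hsA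
        _ = (y - p0) * Real.sqrt A * Real.sqrt (x + B) := by ring
    · rw [if_neg hx']
      push_neg at hx'
      by_cases hy' : p0 < y
      · rw [if_pos hy']
        have h1 : C * ((x / p0) ^ α - 1) ≤ 0 := by
          have : (x / p0) ^ α ≤ 1 :=
            Real.rpow_le_one (div_nonneg hx0.le hp0.le) ((div_le_one hp0).2 hx') hα.le
          nlinarith
        have h2 : 0 < (y - p0) * Real.sqrt (A / (y + B)) := by
          have : 0 < A / (y + B) := div_pos hA (by linarith)
          exact mul_pos (sub_pos.2 hy') (Real.sqrt_pos.2 this)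
        linarith
      · rw [if_neg hy']
        have : (x / p0) ^ α < (y / p0) ^ α :=
          Real.rpow_lt_rpow (div_nonneg hx0.le hp0.le) (by gcongr) hα
        nlinarith

/-- The function `φ(p) = f_L(p) + f_R(p) + v_R - v_L` is continuous and strictly
increasing on `(0, ∞)`, hence has at most one root `p* > 0`. -/
theorem phi_continuous_strictMono (γL γR pL pR ρL ρR vL vR : ℝ)
    (hγL : 1 < γL) (hγR : 1 < γR)
    (hpL : 0 < pL) (hpR : 0 < pR) (hρL : 0 < ρL) (hρR : 0 < ρR) :
    let AL := 2 / ((γL + 1) * ρL)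
    let BL := ((γL - 1) / (γL + 1)) * pL
    let cL := Real.sqrt (γL * pL / ρL)
    let AR := 2 / ((γR + 1) * ρR)
    let BR := ((γR - 1) / (γR + 1)) * pR
    let cR := Real.sqrt (γR * pR / ρR)
    let fL : ℝ → ℝ := fun p =>
      if pL < p then (p - pL) * Real.sqrt (AL / (p + BL))
      else (2 * cL / (γL - 1)) * ((p / pL) ^ ((γL - 1) / (2 * γL)) - 1)
    let fR : ℝ → ℝ := fun p =>
      if pR < p then (p - pR) * Real.sqrt (AR / (p + BR))
      else (2 * cR / (γR - 1)) * ((p / pR) ^ ((γR - 1) / (2 * γR)) - 1)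
    let φ : ℝ → ℝ := fun p => fL p + fR p + vR - vL
    ContinuousOn φ (Set.Ioi 0) ∧ StrictMonoOn φ (Set.Ioi 0) ∧
      ∀ p q : ℝ, 0 < p → 0 < q → φ p = 0 → φ q = 0 → p = q := by
  intro AL BL cL AR BR cR fL fR φ
  have hL := phi_aux AL BL (2 * cL / (γL - 1)) ((γL - 1) / (2 * γL)) pL
    (show (0:ℝ) < 2 / ((γL + 1) * ρL) from div_pos two_pos (by nlinarith))
    (show (0:ℝ) ≤ ((γL - 1) / (γL + 1)) * pL from
      mul_nonneg (div_nonneg (by linarith) (by linarith)) hpL.le)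
    (by
      have hc : 0 < cL := Real.sqrt_pos.2 (by positivity)
      exact div_pos (by linarith) (by linarith))
    (div_pos (by linarith) (by linarith)) hpL
  have hR := phi_aux AR BR (2 * cR / (γR - 1)) ((γR - 1) / (2 * γR)) pR
    (show (0:ℝ) < 2 / ((γR + 1) * ρR) from div_pos two_pos (by nlinarith))
    (show (0:ℝ) ≤ ((γR - 1) / (γR + 1)) * pR from
      mul_nonneg (div_nonneg (by linarith) (by linarith)) hpR.le)
    (by
      have hc : 0 < cR := Real.sqrt_pos.2 (by positivity)
      exact div_pos (by linarith) (by linarith))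
    (div_pos (by linarith) (by linarith)) hpR
  have hcont : ContinuousOn φ (Set.Ioi 0) :=
    ((hL.1.add hR.1).add continuousOn_const).sub continuousOn_const
  have hmono : StrictMonoOn φ (Set.Ioi 0) := by
    intro x hx y hy hxy
    have h1 := hL.2 hx hy hxy
    have h2 := hR.2 hx hy hxy
    simp only [φ]
    have e1 : fL x < fL y := h1
    have e2 : fR x < fR y := h2
    linarith
  refine ⟨hcont, hmono, fun p q hp hq h1 h2 => ?_⟩
  exact hmono.injOn hp hq (h1.trans h2.symm)
end

section
/- φ(p) = f_L(p) + f_R(p) + v_R - v_L (as in the multi-species Riemann problem) has a unique root p* > 0 if and only if v_R - v_L < 2c_L/(γ_L - 1) + 2c_R/(γ_R - 1) (the non-vacuum condition), since φ(p) → v_R - v_L - 2c_L/(γ_L-1) - 2c_R/(γ_R-1) as p → 0+ and φ(p) → +∞ as p → ∞. -/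
open Real Filter Set

noncomputable def fZ (γ p0 ρ : ℝ) : ℝ → ℝ := fun p =>
  if p0 < p then (p - p0) * Real.sqrt ((2 / ((γ + 1) * ρ)) / (p + ((γ - 1) / (γ + 1)) * p0))
  else (2 * Real.sqrt (γ * p0 / ρ) / (γ - 1)) * ((p / p0) ^ ((γ - 1) / (2 * γ)) - 1)


lemma helper_mono {A B p0 x y : ℝ} (hA : 0 < A) (hB0 : 0 < B) (hp0 : 0 < p0)
    (hx : p0 ≤ x) (hxy : x < y) :
    (x - p0) ^ 2 * (A / (x + B)) < (y - p0) ^ 2 * (A / (y + B)) := by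
  have hxB : 0 < x + B := by linarith
  have hyB : 0 < y + B := by linarith
  rw [← mul_div_assoc, ← mul_div_assoc, div_lt_div_iff₀ hxB hyB]
  nlinarith [mul_pos hA (mul_pos (mul_pos (by linarith : (0:ℝ) < p0 + B)
      (sub_pos.2 hxy)) (by linarith : (0:ℝ) < (y - p0) + (x - p0))),
    mul_nonneg (mul_nonneg hA.le (sub_nonneg.2 hx))
      (mul_nonneg (by linarith : (0:ℝ) ≤ y - p0) (sub_pos.2 hxy).le)]

lemma helper_top {A B p0 p : ℝ} (hA : 0 < A) (hB0 : 0 < B) (hp0 : 0 < p0)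
    (hp1 : 2 * p0 ≤ p) (hp2 : B ≤ p) :
    A * p / 8 ≤ (p - p0) ^ 2 * (A / (p + B)) := by
  have hppos : 0 < p := by linarith
  rw [← mul_div_assoc, le_div_iff₀ (by linarith)]
  nlinarith [mul_nonneg (mul_nonneg hA.le hppos.le) (sub_nonneg.2 hp2),
    mul_nonneg (mul_nonneg hA.le (by linarith : (0:ℝ) ≤ p - 2 * p0))
      (by linarith : (0:ℝ) ≤ 3 * p - 2 * p0)]

section fZ
variable {γ p0 ρ : ℝ} (hγ : 1 < γ) (hp0 : 0 < p0) (hρ : 0 < ρ)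
include hγ hp0 hρ

lemma hB : 0 < ((γ - 1) / (γ + 1)) * p0 := by
  have h1 : 0 < γ - 1 := by linarith
  have h2 : 0 < γ + 1 := by linarith
  positivity

lemma he : 0 < (γ - 1) / (2 * γ) := by
  have h1 : 0 < γ - 1 := by linarith
  positivity

lemma hc : 0 < 2 * Real.sqrt (γ * p0 / ρ) / (γ - 1) := by
  have h0 : 0 < γ * p0 / ρ := by positivity
  have := Real.sqrt_pos.2 h0
  have h1 : 0 < γ - 1 := by linarith
  positivity

/-- closed form on `Ici p0` -/
lemma fZ_eq_sqrt {p : ℝ} (hp : p0 ≤ p) :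
    fZ γ p0 ρ p = Real.sqrt ((p - p0) ^ 2 * ((2 / ((γ + 1) * ρ)) / (p + ((γ - 1) / (γ + 1)) * p0))) := by
  unfold fZ
  rcases lt_or_eq_of_le hp with h | h
  · rw [if_pos h, Real.sqrt_mul (sq_nonneg _), Real.sqrt_sq (by linarith)]
  · subst h
    rw [if_neg (lt_irrefl _), div_self hp0.ne', Real.one_rpow, sub_self, mul_zero, sub_self]
    simp

lemma fZ_strictMonoOn : StrictMonoOn (fZ γ p0 ρ) (Set.Ioi 0) := by
  have hB' := hB hγ hp0 hρ
  have hA' : 0 < 2 / ((γ + 1) * ρ) := by positivity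
  have he' := he hγ hp0 hρ
  have key2 : ∀ x y : ℝ, p0 ≤ x → x < y → fZ γ p0 ρ x < fZ γ p0 ρ y := by
    intro x y hx hxy
    rw [fZ_eq_sqrt hγ hp0 hρ hx, fZ_eq_sqrt hγ hp0 hρ (hx.trans hxy.le)]
    have h0 : (0:ℝ) ≤ (x - p0) ^ 2 * ((2 / ((γ + 1) * ρ)) / (x + (γ - 1) / (γ + 1) * p0)) := by
      have : (0:ℝ) < x + (γ - 1) / (γ + 1) * p0 := by linarith
      positivity
    exact Real.sqrt_lt_sqrt h0 (helper_mono hA' hB' hp0 hx hxy)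
  have key1 : ∀ x y : ℝ, 0 < x → x < y → y ≤ p0 → fZ γ p0 ρ x < fZ γ p0 ρ y := by
    intro x y hx hxy hy
    unfold fZ
    rw [if_neg (by linarith), if_neg (not_lt.2 hy)]
    have hc' := hc hγ hp0 hρ
    have : (x / p0) ^ ((γ - 1) / (2 * γ)) < (y / p0) ^ ((γ - 1) / (2 * γ)) :=
      Real.rpow_lt_rpow (by positivity) (by apply div_lt_div_of_pos_right hxy hp0) he'
    nlinarith
  intro x hx y hy hxy
  rcases le_or_gt x p0 with h1 | h1
  · rcases le_or_gt y p0 with h2 | h2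
    · exact key1 x y hx hxy h2
    · rcases lt_or_eq_of_le h1 with h3 | h3
      · exact (key1 x p0 hx h3 le_rfl).trans (key2 p0 y le_rfl h2)
      · subst h3; exact key2 x y le_rfl hxy
  · exact key2 x y h1.le hxy

lemma fZ_continuousOn : ContinuousOn (fZ γ p0 ρ) (Set.Ioi 0) := by
  have hB' := hB hγ hp0 hρ
  have he' := he hγ hp0 hρ
  unfold fZ
  apply ContinuousOn.if
  · intro a ha
    have h0 : a = p0 := by
      have := ha.2
      rw [show {a : ℝ | p0 < a} = Set.Ioi p0 from rfl, frontier_Ioi] at this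
      exact this
    subst h0
    rw [div_self hp0.ne', Real.one_rpow]
    ring
  · apply ContinuousOn.mul
    · exact (continuous_id.sub continuous_const).continuousOn
    · apply Real.continuous_sqrt.comp_continuousOn
      apply ContinuousOn.div continuousOn_const
        (continuous_id.add continuous_const).continuousOn
      intro x hx
      have hx1 : x ∈ closure {a : ℝ | p0 < a} := hx.2
      rw [show {a : ℝ | p0 < a} = Set.Ioi p0 from rfl, closure_Ioi] at hx1
      have h5 : p0 ≤ x := hx1
      simp only [Pi.add_apply, id_eq]
      nlinarith
  · apply Continuous.continuousOn
    apply Continuous.mul continuous_const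
    apply Continuous.sub _ continuous_const
    have hrc : Continuous fun x : ℝ => x ^ ((γ - 1) / (2 * γ)) := by
      rw [continuous_iff_continuousAt]
      exact fun x => Real.continuousAt_rpow_const x _ (Or.inr he'.le)
    exact hrc.comp (continuous_id.div_const p0)

lemma fZ_tendsto_zero :
    Tendsto (fZ γ p0 ρ) (nhdsWithin 0 (Set.Ioi 0))
      (nhds (-(2 * Real.sqrt (γ * p0 / ρ) / (γ - 1)))) := by
  have he' := he hγ hp0 hρ
  set C := 2 * Real.sqrt (γ * p0 / ρ) / (γ - 1) with hC
  have heq : ∀ᶠ p in nhdsWithin 0 (Set.Ioi 0),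
      C * ((p / p0) ^ ((γ - 1) / (2 * γ)) - 1) = fZ γ p0 ρ p := by
    have h1 : ∀ᶠ p in nhdsWithin (0:ℝ) (Set.Ioi 0), p < p0 :=
      eventually_nhdsWithin_of_eventually_nhds (eventually_lt_nhds hp0)
    filter_upwards [h1] with p hp
    unfold fZ
    rw [if_neg (by linarith)]
  apply Tendsto.congr' heq
  have hg : Tendsto (fun p : ℝ => (p / p0) ^ ((γ - 1) / (2 * γ))) (nhds 0) (nhds 0) := by
    have h2 : ContinuousAt (fun x : ℝ => x ^ ((γ - 1) / (2 * γ))) 0 :=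
      Real.continuousAt_rpow_const 0 _ (Or.inr he'.le)
    have h3 : Tendsto (fun p : ℝ => p / p0) (nhds 0) (nhds 0) := by
      have hid : Continuous (fun p : ℝ => p / p0) := continuous_id.div_const p0
      have h3' := hid.tendsto 0
      rwa [zero_div] at h3' 
    have := h2.tendsto.comp h3
    simpa [Function.comp_def, Real.zero_rpow he'.ne'] using this
  have h4 := ((hg.sub_const 1).const_mul C).mono_left
    (nhdsWithin_le_nhds (s := Set.Ioi (0:ℝ)))
  have h5 : C * (0 - 1) = -C := by ring
  rwa [h5] at h4

lemma fZ_tendsto_atTop : Tendsto (fZ γ p0 ρ) atTop atTop := by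
  have hB' := hB hγ hp0 hρ
  have hA' : 0 < 2 / ((γ + 1) * ρ) := by positivity
  set A := 2 / ((γ + 1) * ρ) with hAdef
  set B := ((γ - 1) / (γ + 1)) * p0 with hBdef
  have hsqrt : Tendsto (fun p : ℝ => Real.sqrt (A * p / 8)) atTop atTop := by
    apply Filter.tendsto_atTop_atTop.2
    intro b
    refine ⟨(max b 0) ^ 2 * 8 / A, fun a ha => ?_⟩
    have h1 : (max b 0) ^ 2 ≤ A * a / 8 := by
      rw [div_le_iff₀ hA'] at ha
      rw [le_div_iff₀ (by norm_num : (0:ℝ) < 8)]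
      nlinarith
    calc b ≤ max b 0 := le_max_left _ _
      _ = Real.sqrt ((max b 0) ^ 2) := (Real.sqrt_sq (le_max_right _ _)).symm
      _ ≤ Real.sqrt (A * a / 8) := Real.sqrt_le_sqrt h1
  apply tendsto_atTop_mono' atTop _ hsqrt
  filter_upwards [eventually_ge_atTop (max (2 * p0) B)] with p hp
  have hp1 : 2 * p0 ≤ p := le_trans (le_max_left _ _) hp
  have hp2 : B ≤ p := le_trans (le_max_right _ _) hp
  have hppos : 0 < p := by linarith
  rw [fZ_eq_sqrt hγ hp0 hρ (by linarith)]
  exact Real.sqrt_le_sqrt (helper_top hA' hB' hp0 hp1 hp2)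

lemma fZ_lowerBound {p : ℝ} (hp : 0 < p) :
    -(2 * Real.sqrt (γ * p0 / ρ) / (γ - 1)) ≤ fZ γ p0 ρ p := by
  have hc' := hc hγ hp0 hρ
  unfold fZ
  split_ifs with h
  · have h1 : 0 ≤ (p - p0) * Real.sqrt ((2 / ((γ + 1) * ρ)) / (p + ((γ - 1) / (γ + 1)) * p0)) :=
      mul_nonneg (by linarith) (Real.sqrt_nonneg _)
    linarith
  · have h2 : (0:ℝ) ≤ (p / p0) ^ ((γ - 1) / (2 * γ)) := Real.rpow_nonneg (by positivity) _
    nlinarith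

end fZ

theorem main_aux (γL γR pL pR ρL ρR vL vR : ℝ)
    (hγL : 1 < γL) (hγR : 1 < γR)
    (hpL : 0 < pL) (hpR : 0 < pR) (hρL : 0 < ρL) (hρR : 0 < ρR) :
    Filter.Tendsto (fun p => fZ γL pL ρL p + fZ γR pR ρR p + vR - vL)
      (nhdsWithin 0 (Set.Ioi 0))
      (nhds (vR - vL - 2 * Real.sqrt (γL * pL / ρL) / (γL - 1)
        - 2 * Real.sqrt (γR * pR / ρR) / (γR - 1))) ∧
    Filter.Tendsto (fun p => fZ γL pL ρL p + fZ γR pR ρR p + vR - vL)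
      Filter.atTop Filter.atTop ∧
    ((∃! p : ℝ, 0 < p ∧ fZ γL pL ρL p + fZ γR pR ρR p + vR - vL = 0) ↔
      vR - vL < 2 * Real.sqrt (γL * pL / ρL) / (γL - 1)
        + 2 * Real.sqrt (γR * pR / ρR) / (γR - 1)) := by
  have part1 : Filter.Tendsto (fun p => fZ γL pL ρL p + fZ γR pR ρR p + vR - vL)
      (nhdsWithin 0 (Set.Ioi 0))
      (nhds (vR - vL - 2 * Real.sqrt (γL * pL / ρL) / (γL - 1)
        - 2 * Real.sqrt (γR * pR / ρR) / (γR - 1))) := by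
    have h1 := (((fZ_tendsto_zero hγL hpL hρL).add
      (fZ_tendsto_zero hγR hpR hρR)).add_const vR).sub_const vL
    have h2 : -(2 * Real.sqrt (γL * pL / ρL) / (γL - 1))
        + -(2 * Real.sqrt (γR * pR / ρR) / (γR - 1)) + vR - vL
        = vR - vL - 2 * Real.sqrt (γL * pL / ρL) / (γL - 1)
        - 2 * Real.sqrt (γR * pR / ρR) / (γR - 1) := by ring
    rwa [h2] at h1
  have part2 : Filter.Tendsto (fun p => fZ γL pL ρL p + fZ γR pR ρR p + vR - vL)
      Filter.atTop Filter.atTop := by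
    have hLtop := fZ_tendsto_atTop hγL hpL hρL
    have h := tendsto_atTop_add_const_right Filter.atTop
      (-(2 * Real.sqrt (γR * pR / ρR) / (γR - 1)) + vR - vL) hLtop
    apply tendsto_atTop_mono' Filter.atTop _ h
    filter_upwards [eventually_gt_atTop 0] with p hp
    have hlb := fZ_lowerBound hγR hpR hρR hp
    show fZ γL pL ρL p + (-(2 * Real.sqrt (γR * pR / ρR) / (γR - 1)) + vR - vL)
      ≤ fZ γL pL ρL p + fZ γR pR ρR p + vR - vL
    linarith
  have hmono : StrictMonoOn (fun p => fZ γL pL ρL p + fZ γR pR ρR p + vR - vL)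
      (Set.Ioi 0) := by
    intro x hx y hy hxy
    have h1 := fZ_strictMonoOn hγL hpL hρL hx hy hxy
    have h2 := fZ_strictMonoOn hγR hpR hρR hx hy hxy
    simp only []
    linarith
  have hcont : ContinuousOn (fun p => fZ γL pL ρL p + fZ γR pR ρR p + vR - vL)
      (Set.Ioi 0) :=
    ContinuousOn.sub (ContinuousOn.add (ContinuousOn.add
      (fZ_continuousOn hγL hpL hρL) (fZ_continuousOn hγR hpR hρR))
      continuousOn_const) continuousOn_const
  refine ⟨part1, part2, ?_⟩
  constructor
  · rintro ⟨p, ⟨hp, hroot⟩, -⟩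
    by_contra hcon
    push_neg at hcon
    have hhalf : p / 2 ∈ Set.Ioi (0:ℝ) := by
      simp only [Set.mem_Ioi]; linarith
    have hq : vR - vL - 2 * Real.sqrt (γL * pL / ρL) / (γL - 1)
        - 2 * Real.sqrt (γR * pR / ρR) / (γR - 1)
        ≤ fZ γL pL ρL (p/2) + fZ γR pR ρR (p/2) + vR - vL := by
      refine le_of_tendsto part1 ?_
      filter_upwards [eventually_mem_nhdsWithin,
        eventually_nhdsWithin_of_eventually_nhds (eventually_lt_nhds hhalf)] with r hr1 hr2
      exact (hmono hr1 hhalf hr2).le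
    have h2 := hmono hhalf (Set.mem_Ioi.2 hp) (by linarith)
    simp only [] at h2
    rw [hroot] at h2
    linarith
  · intro hcond
    have hL0 : vR - vL - 2 * Real.sqrt (γL * pL / ρL) / (γL - 1)
        - 2 * Real.sqrt (γR * pR / ρR) / (γR - 1) < 0 := by linarith
    have hneg := part1.eventually_lt_const hL0
    obtain ⟨a, ha0, haneg⟩ := ((eventually_mem_nhdsWithin (a := (0:ℝ))
      (s := Set.Ioi 0)).and hneg).exists
    rw [Set.mem_Ioi] at ha0
    obtain ⟨b, hab, hbpos⟩ := ((eventually_gt_atTop a).and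
      (part2.eventually_gt_atTop 0)).exists
    have hsub : Set.Icc a b ⊆ Set.Ioi 0 := fun x hx => lt_of_lt_of_le ha0 hx.1
    have hmem : (0:ℝ) ∈ Set.Icc (fZ γL pL ρL a + fZ γR pR ρR a + vR - vL)
        (fZ γL pL ρL b + fZ γR pR ρR b + vR - vL) := ⟨haneg.le, hbpos.le⟩
    obtain ⟨r, hrmem, hr0⟩ := intermediate_value_Icc hab.le (hcont.mono hsub) hmem
    have hr0' : 0 < r := lt_of_lt_of_le ha0 hrmem.1
    refine ⟨r, ⟨hr0', hr0⟩, ?_⟩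
    rintro q ⟨hq0, hq⟩
    exact hmono.injOn (Set.mem_Ioi.2 hq0) (Set.mem_Ioi.2 hr0') (hq.trans hr0.symm)

/-- `φ` has a unique root `p* > 0` iff the non-vacuum condition
`v_R - v_L < 2c_L/(γ_L-1) + 2c_R/(γ_R-1)` holds, since
`φ(p) → v_R - v_L - 2c_L/(γ_L-1) - 2c_R/(γ_R-1)` as `p → 0⁺` and
`φ(p) → +∞` as `p → ∞`. -/
theorem phi_unique_root_iff_nonvacuum (γL γR pL pR ρL ρR vL vR : ℝ)
    (hγL : 1 < γL) (hγR : 1 < γR)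
    (hpL : 0 < pL) (hpR : 0 < pR) (hρL : 0 < ρL) (hρR : 0 < ρR) :
    let AL := 2 / ((γL + 1) * ρL)
    let BL := ((γL - 1) / (γL + 1)) * pL
    let cL := Real.sqrt (γL * pL / ρL)
    let AR := 2 / ((γR + 1) * ρR)
    let BR := ((γR - 1) / (γR + 1)) * pR
    let cR := Real.sqrt (γR * pR / ρR)
    let fL : ℝ → ℝ := fun p =>
      if pL < p then (p - pL) * Real.sqrt (AL / (p + BL))
      else (2 * cL / (γL - 1)) * ((p / pL) ^ ((γL - 1) / (2 * γL)) - 1)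
    let fR : ℝ → ℝ := fun p =>
      if pR < p then (p - pR) * Real.sqrt (AR / (p + BR))
      else (2 * cR / (γR - 1)) * ((p / pR) ^ ((γR - 1) / (2 * γR)) - 1)
    let φ : ℝ → ℝ := fun p => fL p + fR p + vR - vL
    Filter.Tendsto φ (nhdsWithin 0 (Set.Ioi 0))
      (nhds (vR - vL - 2 * cL / (γL - 1) - 2 * cR / (γR - 1))) ∧
    Filter.Tendsto φ Filter.atTop Filter.atTop ∧
    ((∃! p : ℝ, 0 < p ∧ φ p = 0) ↔
      vR - vL < 2 * cL / (γL - 1) + 2 * cR / (γR - 1)) := by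
  intro AL BL cL AR BR cR fL fR φ
  exact main_aux γL γR pL pR ρL ρR vL vR hγL hγR hpL hpR hρL hρR
end

section
/- The extreme wave speeds in the multi-species Riemann problem are well ordered: for any p* > 0, λ_L^-(p*) ≤ λ_L^+(p*) and λ_R^-(p*) ≤ λ_R^+(p*), where λ_L^-(p*) = v_L - c_L sqrt(1 + ((γ_L+1)/(2γ_L)) max((p*-p_L)/p_L, 0)), λ_L^+(p*) equals v_L - f_L(p*) - c_L (p*/p_L)^{(γ_L-1)/(2γ_L)} if p* < p_L and λ_L^-(p*) otherwise, and symmetrically on the right. -/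
lemma rarefaction_aux (γ p ps c : ℝ) (hγ : 1 < γ) (hp : 0 < p) (hps : 0 < ps)
    (hlt : ps < p) (hc : 0 ≤ c) :
    (2 * c / (γ - 1)) * ((ps / p) ^ ((γ - 1) / (2 * γ)) - 1)
      + c * (ps / p) ^ ((γ - 1) / (2 * γ)) ≤ c := by
  set x := (ps / p) ^ ((γ - 1) / (2 * γ)) with hx
  have hx1 : x ≤ 1 :=
    Real.rpow_le_one (by positivity) ((div_le_one hp).2 hlt.le)
      (div_nonneg (by linarith) (by linarith))
  have h1 : 0 ≤ 2 * c / (γ - 1) := div_nonneg (by linarith) (by linarith)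
  have h2 : (2 * c / (γ - 1)) * (x - 1) ≤ 0 := mul_nonpos_of_nonneg_of_nonpos h1 (by linarith)
  nlinarith

/-- The extreme wave speeds in the multi-species Riemann problem are well
ordered: `λ_L^- ≤ λ_L^+` and `λ_R^- ≤ λ_R^+` for any `p* > 0`. -/
theorem wave_speeds_ordered (γL γR pL pR ρL ρR vL vR : ℝ)
    (hγL : 1 < γL) (hγR : 1 < γR)
    (hpL : 0 < pL) (hpR : 0 < pR) (hρL : 0 < ρL) (hρR : 0 < ρR) :
    let AL := 2 / ((γL + 1) * ρL)
    let BL := ((γL - 1) / (γL + 1)) * pL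
    let cL := Real.sqrt (γL * pL / ρL)
    let AR := 2 / ((γR + 1) * ρR)
    let BR := ((γR - 1) / (γR + 1)) * pR
    let cR := Real.sqrt (γR * pR / ρR)
    let fL : ℝ → ℝ := fun p =>
      if pL < p then (p - pL) * Real.sqrt (AL / (p + BL))
      else (2 * cL / (γL - 1)) * ((p / pL) ^ ((γL - 1) / (2 * γL)) - 1)
    let fR : ℝ → ℝ := fun p =>
      if pR < p then (p - pR) * Real.sqrt (AR / (p + BR))
      else (2 * cR / (γR - 1)) * ((p / pR) ^ ((γR - 1) / (2 * γR)) - 1)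
    let lamLm : ℝ → ℝ := fun ps =>
      vL - cL * Real.sqrt (1 + ((γL + 1) / (2 * γL)) * max ((ps - pL) / pL) 0)
    let lamLp : ℝ → ℝ := fun ps =>
      if ps < pL then vL - fL ps - cL * (ps / pL) ^ ((γL - 1) / (2 * γL))
      else lamLm ps
    let lamRp : ℝ → ℝ := fun ps =>
      vR + cR * Real.sqrt (1 + ((γR + 1) / (2 * γR)) * max ((ps - pR) / pR) 0)
    let lamRm : ℝ → ℝ := fun ps =>
      if ps < pR then vR + fR ps + cR * (ps / pR) ^ ((γR - 1) / (2 * γR))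
      else lamRp ps
    ∀ ps : ℝ, 0 < ps → lamLm ps ≤ lamLp ps ∧ lamRm ps ≤ lamRp ps := by
  intro AL BL cL AR BR cR fL fR lamLm lamLp lamRp lamRm ps hps
  have hcL : 0 ≤ cL := Real.sqrt_nonneg _
  have hcR : 0 ≤ cR := Real.sqrt_nonneg _
  constructor
  · by_cases h : ps < pL
    · have hmax : max ((ps - pL) / pL) 0 = 0 :=
        max_eq_right (div_nonpos_of_nonpos_of_nonneg (by linarith) hpL.le)
      have hm : lamLm ps = vL - cL := by
        simp only [lamLm, hmax, mul_zero, add_zero, Real.sqrt_one, mul_one]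
      have hp : lamLp ps = vL - fL ps - cL * (ps / pL) ^ ((γL - 1) / (2 * γL)) := by
        simp only [lamLp, if_pos h]
      have hf : fL ps = (2 * cL / (γL - 1)) * ((ps / pL) ^ ((γL - 1) / (2 * γL)) - 1) := by
        simp only [fL, if_neg (not_lt.2 h.le)]
      rw [hm, hp, hf]
      have := rarefaction_aux γL pL ps cL hγL hpL hps h hcL
      linarith
    · simp only [lamLp, if_neg h, le_refl]
  · by_cases h : ps < pR
    · have hmax : max ((ps - pR) / pR) 0 = 0 :=
        max_eq_right (div_nonpos_of_nonpos_of_nonneg (by linarith) hpR.le)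
      have hm : lamRp ps = vR + cR := by
        simp only [lamRp, hmax, mul_zero, add_zero, Real.sqrt_one, mul_one]
      have hp : lamRm ps = vR + fR ps + cR * (ps / pR) ^ ((γR - 1) / (2 * γR)) := by
        simp only [lamRm, if_pos h]
      have hf : fR ps = (2 * cR / (γR - 1)) * ((ps / pR) ^ ((γR - 1) / (2 * γR)) - 1) := by
        simp only [fR, if_neg (not_lt.2 h.le)]
      rw [hm, hp, hf]
      have := rarefaction_aux γR pR ps cR hγR hpR hps h hcR
      linarith
    · simp only [lamRm, if_neg h, le_refl]
end
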